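/- Let q be a positive integer and K a field. For any indices with i₁ ≤ j₁ and i₂ ≤ j₂ in Fin q such that the ordered pairs (i₁, j₁) ≠ (i₂, j₂), the monomial τ_{i₁}·τ_{j₁} does not divide τ_{i₂}·τ_{j₂} in MvPolynomial (Equiv.Perm (Fin q)) K. Hence {τ_i τ_j : 1 ≤ i ≤ j ≤ q} is the minimal generating set of T_q². -/

import Mathlib

/-- The generator `τ_i = ∏_{σ ∈ S_q} x_σ^{σ(i)}` of the permutation ideal `T_q`, where
`σ(i) = (σ i : ℕ) + 1` is the 1-indexed value of the permutation `σ` at `i`. -/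
noncomputable def tauGen (K : Type*) [Field K] (q : ℕ) (i : Fin q) :
    MvPolynomial (Equiv.Perm (Fin q)) K :=
  ∏ σ : Equiv.Perm (Fin q), MvPolynomial.X σ ^ ((σ i : ℕ) + 1)

lemma exists_perm_two {q : ℕ} (x y u v : Fin q) (hxy : x ≠ y) (huv : u ≠ v) :
    ∃ σ : Equiv.Perm (Fin q), σ x = u ∧ σ y = v := by
  set A := Equiv.swap x u y with hA
  have h1 : A ≠ u := by
    intro h
    have : Equiv.swap x u y = Equiv.swap x u x := by
      rw [Equiv.swap_apply_left]; exact h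
    exact hxy (Equiv.injective _ this).symm
  refine ⟨(Equiv.swap x u).trans (Equiv.swap A v), ?_, ?_⟩
  · simp only [Equiv.trans_apply, Equiv.swap_apply_left]
    exact Equiv.swap_apply_of_ne_of_ne (Ne.symm h1) huv
  · simp only [Equiv.trans_apply, ← hA, Equiv.swap_apply_left]

/-- If an element of pair 1 is outside pair 2 (and pair 1 has two distinct elements),
the inequality fails for some permutation. -/
lemma key_outside {q : ℕ} (x y i₂ j₂ : Fin q)
    (hxy : x ≠ y) (hx2 : x ≠ i₂) (hx2' : x ≠ j₂) (h2 : i₂ ≠ j₂)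
    (h : ∀ σ : Equiv.Perm (Fin q), (σ x : ℕ) + (σ y : ℕ) ≤ (σ i₂ : ℕ) + (σ j₂ : ℕ)) :
    False := by
  have hq2 : 2 ≤ q := by
    rcases Nat.lt_or_ge q 2 with h' | h'
    · interval_cases q
      · exact x.elim0
      · exact (hxy (Subsingleton.elim x y)).elim
    · exact h'
  have t : Fin q := ⟨q - 1, by omega⟩
  obtain ⟨σ, hσx, hσy⟩ := exists_perm_two x y ⟨q - 1, by omega⟩ ⟨q - 2, by omega⟩ hxy
    (by simp only [ne_eq, Fin.mk.injEq]; omega)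
  have hx : (σ x : ℕ) = q - 1 := by rw [hσx]
  have hy : (σ y : ℕ) = q - 2 := by rw [hσy]
  have hA : (σ i₂ : ℕ) < q := (σ i₂).is_lt
  have hB : (σ j₂ : ℕ) < q := (σ j₂).is_lt
  have hAx : (σ i₂ : ℕ) ≠ q - 1 := fun hAx => hx2 (σ.injective (Fin.ext (by rw [hAx, hx]))).symm
  have hBx : (σ j₂ : ℕ) ≠ q - 1 := fun hBx => hx2' (σ.injective (Fin.ext (by rw [hBx, hx]))).symm
  have hAB : (σ i₂ : ℕ) ≠ (σ j₂ : ℕ) := fun hAB => h2 (σ.injective (Fin.ext hAB))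
  have := h σ
  omega

lemma key {q : ℕ} (hq : 0 < q) (i₁ j₁ i₂ j₂ : Fin q)
    (h : ∀ σ : Equiv.Perm (Fin q), (σ i₁ : ℕ) + (σ j₁ : ℕ) ≤ (σ i₂ : ℕ) + (σ j₂ : ℕ)) :
    (i₁ = i₂ ∧ j₁ = j₂) ∨ (i₁ = j₂ ∧ j₁ = i₂) := by
  by_cases hij : i₁ = j₁
  · -- pair 1 is (a, a); force i₂ = j₂ = a using σ a = q-1
    subst hij
    obtain ⟨σ, hσ⟩ : ∃ σ : Equiv.Perm (Fin q), σ i₁ = ⟨q - 1, by omega⟩ :=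
      ⟨Equiv.swap i₁ ⟨q - 1, by omega⟩, Equiv.swap_apply_left _ _⟩
    have hx : (σ i₁ : ℕ) = q - 1 := by rw [hσ]
    have hA : (σ i₂ : ℕ) < q := (σ i₂).is_lt
    have hB : (σ j₂ : ℕ) < q := (σ j₂).is_lt
    have := h σ
    have hA' : (σ i₂ : ℕ) = q - 1 := by omega
    have hB' : (σ j₂ : ℕ) = q - 1 := by omega
    have e1 : i₁ = i₂ := σ.injective (Fin.ext (by rw [hx, hA']))
    have e2 : i₁ = j₂ := σ.injective (Fin.ext (by rw [hx, hB']))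
    exact Or.inl ⟨e1, e2⟩
  · by_cases hc : i₂ = j₂
    · -- pair 2 is (c, c)
      exfalso
      subst hc
      by_cases h1 : i₁ = i₂
      · -- then j₁ ≠ i₂; from σ j₁ ≤ σ i₂ for all σ, take σ j₁ = q-1
        subst h1
        obtain ⟨σ, hσ⟩ : ∃ σ : Equiv.Perm (Fin q), σ j₁ = ⟨q - 1, by omega⟩ :=
          ⟨Equiv.swap j₁ ⟨q - 1, by omega⟩, Equiv.swap_apply_left _ _⟩
        have hx : (σ j₁ : ℕ) = q - 1 := by rw [hσ]
        have hA : (σ i₁ : ℕ) < q := (σ i₁).is_lt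
        have := h σ
        have : (σ i₁ : ℕ) = q - 1 := by omega
        exact hij (σ.injective (Fin.ext (by rw [this, hx]))).symm
      · by_cases h2 : j₁ = i₂
        · subst h2
          obtain ⟨σ, hσ⟩ : ∃ σ : Equiv.Perm (Fin q), σ i₁ = ⟨q - 1, by omega⟩ :=
            ⟨Equiv.swap i₁ ⟨q - 1, by omega⟩, Equiv.swap_apply_left _ _⟩
          have hx : (σ i₁ : ℕ) = q - 1 := by rw [hσ]
          have hA : (σ j₁ : ℕ) < q := (σ j₁).is_lt
          have := h σ
          have : (σ j₁ : ℕ) = q - 1 := by omega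
          exact hij (σ.injective (Fin.ext (by rw [hx, this])))
        · -- both i₁, j₁ differ from i₂; σ i₁ = q-1, σ j₁ = q-2
          obtain ⟨σ, hσx, hσy⟩ := exists_perm_two i₁ j₁ ⟨q - 1, by omega⟩ ⟨q - 2, by omega⟩ hij
            (by
              simp only [ne_eq, Fin.mk.injEq]
              have : 2 ≤ q := by
                rcases Nat.lt_or_ge q 2 with h' | h'
                · interval_cases q
                  exact (hij (Subsingleton.elim i₁ j₁)).elim
                · exact h'
              omega)
          have hx : (σ i₁ : ℕ) = q - 1 := by rw [hσx]
          have hy : (σ j₁ : ℕ) = q - 2 := by rw [hσy]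
          have hA : (σ i₂ : ℕ) < q := (σ i₂).is_lt
          have hAx : (σ i₂ : ℕ) ≠ q - 1 :=
            fun hAx => h1 (σ.injective (Fin.ext (by rw [hAx, hx]))).symm
          have := h σ
          -- σ i₂ ≤ q - 2, so RHS ≤ 2(q-2) < (q-1)+(q-2) unless q small
          have hy2 : (σ j₁ : ℕ) ≠ (σ i₂ : ℕ) :=
            fun hE => h2 (σ.injective (Fin.ext hE))
          omega
    · -- i₂ ≠ j₂: either pair1 ⊆ pair2 (gives the disjunction) or contradiction
      by_cases hmem : (i₁ = i₂ ∨ i₁ = j₂) ∧ (j₁ = i₂ ∨ j₁ = j₂)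
      · rcases hmem with ⟨h1 | h1, h2 | h2⟩
        · exact absurd (h1.trans h2.symm) hij
        · exact Or.inl ⟨h1, h2⟩
        · exact Or.inr ⟨h1, h2⟩
        · exact absurd (h1.trans h2.symm) hij
      · exfalso
        push_neg at hmem
        by_cases hi : i₁ = i₂ ∨ i₁ = j₂
        · obtain ⟨hj1, hj2⟩ := hmem hi
          exact key_outside j₁ i₁ i₂ j₂ (Ne.symm hij) hj1 hj2 hc
            (fun σ => by rw [Nat.add_comm]; exact h σ)
        · push_neg at hi
          exact key_outside i₁ j₁ i₂ j₂ hij hi.1 hi.2 hc h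

lemma tauGen_eq (K : Type*) [Field K] (q : ℕ) (i : Fin q) :
    tauGen K q i =
      MvPolynomial.monomial
        (Finsupp.equivFunOnFinite.symm fun σ : Equiv.Perm (Fin q) => (σ i : ℕ) + 1) 1 := by
  rw [tauGen, ← MvPolynomial.prod_X_pow_eq_monomial]
  symm
  apply Finset.prod_subset (Finset.subset_univ _)
  intro x _ hx
  simp [Finsupp.mem_support_iff] at hx

/-- For pairs `i₁ ≤ j₁` and `i₂ ≤ j₂` in `Fin q` with `(i₁, j₁) ≠ (i₂, j₂)`, the monomial
`τ_{i₁} τ_{j₁}` does not divide `τ_{i₂} τ_{j₂}`; hence `{τ_i τ_j : 1 ≤ i ≤ j ≤ q}` is the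
minimal generating set of `T_q²`. -/
theorem tau_mul_not_dvd_tau_mul (K : Type*) [Field K] (q : ℕ) (hq : 0 < q)
    (i₁ j₁ i₂ j₂ : Fin q) (h₁ : i₁ ≤ j₁) (h₂ : i₂ ≤ j₂)
    (hne : (i₁, j₁) ≠ (i₂, j₂)) :
    ¬ (tauGen K q i₁ * tauGen K q j₁ ∣ tauGen K q i₂ * tauGen K q j₂) := by
  intro hdvd
  rw [tauGen_eq, tauGen_eq, tauGen_eq, tauGen_eq, MvPolynomial.monomial_mul,
    MvPolynomial.monomial_mul, MvPolynomial.monomial_dvd_monomial] at hdvd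
  obtain ⟨h0 | hle, -⟩ := hdvd
  · simp at h0
  · have hpt : ∀ σ : Equiv.Perm (Fin q), (σ i₁ : ℕ) + (σ j₁ : ℕ) ≤ (σ i₂ : ℕ) + (σ j₂ : ℕ) := by
      intro σ
      have := (Finsupp.le_def.mp hle) σ
      simp only [Finsupp.add_apply, Finsupp.coe_equivFunOnFinite_symm] at this
      omega
    rcases key hq i₁ j₁ i₂ j₂ hpt with ⟨e1, e2⟩ | ⟨e1, e2⟩
    · exact hne (by rw [e1, e2])
    · have hb : j₁ ≤ i₁ := by rw [← e1, ← e2] at h₂; exact h₂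
      have hij : i₁ = j₁ := le_antisymm h₁ hb
      exact hne (Prod.ext (hij.trans e2) (hij.symm.trans e1))
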